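/- If M is a minimal model of a Horn constraint program P, then M is a derivable model of P. -/

import Mathlib

universe u

/-- A constraint `A = (X, C)`: domain `X` and a family `C` of subsets of `X`. -/
structure Constraint (α : Type u) where
  dom : Set α
  sat : Set (Set α)
  sat_sub : ∀ Y ∈ sat, Y ⊆ dom

/-- `M ⊨ A` iff `M ∩ Dom(A) ∈ C`. -/
def Constraint.Sat {α : Type u} (M : Set α) (A : Constraint α) : Prop :=
  M ∩ A.dom ∈ A.sat

/-- A constraint is monotone if its satisfying family is closed under supersets
within the domain. -/
def Constraint.Mono {α : Type u} (A : Constraint α) : Prop :=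
  ∀ W Y : Set α, W ∈ A.sat → W ⊆ Y → Y ⊆ A.dom → Y ∈ A.sat

/-- A rule `A ← A₁,…,A_k, not(A_{k+1}),…,not(A_m)`. -/
structure Rule (α : Type u) where
  head : Constraint α
  pos : Set (Constraint α)
  neg : Set (Constraint α)

/-- A constraint program is a set of rules. -/
abbrev Program (α : Type u) := Set (Rule α)

def Rule.Horn {α : Type u} (r : Rule α) : Prop := r.neg = ∅

def Rule.Mono {α : Type u} (r : Rule α) : Prop :=
  r.head.Mono ∧ (∀ A ∈ r.pos, A.Mono) ∧ (∀ A ∈ r.neg, A.Mono)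

def Program.Horn {α : Type u} (P : Program α) : Prop := ∀ r ∈ P, r.Horn

def Program.Mono {α : Type u} (P : Program α) : Prop := ∀ r ∈ P, r.Mono

/-- `M` satisfies the body of `r`. -/
def Rule.BodySat {α : Type u} (M : Set α) (r : Rule α) : Prop :=
  (∀ A ∈ r.pos, Constraint.Sat M A) ∧ (∀ A ∈ r.neg, ¬ Constraint.Sat M A)

/-- `P(M)`: the set of `M`-applicable rules of `P`. -/
def Program.app {α : Type u} (P : Program α) (M : Set α) : Program α :=
  {r ∈ P | r.BodySat M}

/-- `hset(r) = Dom(hd(r))`. -/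
def Rule.hset {α : Type u} (r : Rule α) : Set α := r.head.dom

/-- `hset(P)`: union of the headsets of rules of `P`. -/
def Program.hset {α : Type u} (P : Program α) : Set α := ⋃ r ∈ P, r.hset

def Rule.atoms {α : Type u} (r : Rule α) : Set α :=
  r.head.dom ∪ (⋃ A ∈ r.pos, A.dom) ∪ (⋃ A ∈ r.neg, A.dom)

/-- `At(P)`: atoms occurring in domains of constraints of `P`. -/
def Program.atoms {α : Type u} (P : Program α) : Set α := ⋃ r ∈ P, r.atoms

/-- `M` is a model of `P`. -/
def Program.IsModel {α : Type u} (P : Program α) (M : Set α) : Prop :=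
  ∀ r ∈ P, r.BodySat M → Constraint.Sat M r.head

/-- `M` is a supported model of `P`. -/
def Program.Supported {α : Type u} (P : Program α) (M : Set α) : Prop :=
  P.IsModel M ∧ M ⊆ (P.app M).hset

/-- The nondeterministic one-step provability operator `T_P^nd`. -/
def Program.Tnd {α : Type u} (P : Program α) (M : Set α) : Set (Set α) :=
  {M' | M' ⊆ (P.app M).hset ∧ ∀ r ∈ P.app M, Constraint.Sat M' r.head}

/-- A `P`-computation: a transfinite sequence starting at `∅`, increasing, with
each successor step nondeterministically one-step provable, continuous at limits. -/
structure PComputation {α : Type u} (P : Program α) where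
  X : Ordinal.{u} → Set α
  zero : X 0 = ∅
  incr : ∀ o, X o ⊆ X (o + 1)
  step : ∀ o, X (o + 1) ∈ P.Tnd (X o)
  limit : ∀ o : Ordinal.{u}, Order.IsSuccLimit o → X o = ⋃ β < o, X β

/-- The result `R_t` of a computation. -/
def PComputation.result {α : Type u} {P : Program α} (t : PComputation P) : Set α :=
  ⋃ o, t.X o

/-- `M` is a derivable model of `P`: the result of some `P`-computation. -/
def Program.Derivable {α : Type u} (P : Program α) (M : Set α) : Prop :=
  ∃ t : PComputation P, t.result = M

/-- The canonical sequence `t^{P,M}`: `X₀ = ∅`, `X_{β+1} = hset(P(X_β)) ∩ M`,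
unions at limits. -/
noncomputable def canSeq {α : Type u} (P : Program α) (M : Set α) (o : Ordinal.{u}) :
    Set α :=
  Ordinal.limitRecOn o ∅ (fun _ ih => (P.app ih).hset ∩ M)
    (fun o _ ih => ⋃ β : Ordinal.{u}, ⋃ h : β < o, ih β h)

/-- `Can(P,M)`: the result of the canonical computation. -/
noncomputable def Can {α : Type u} (P : Program α) (M : Set α) : Set α :=
  ⋃ o, canSeq P M o

/-- The reduct of a single rule: drop negated literals. -/
def Rule.pos_part {α : Type u} (r : Rule α) : Rule α := ⟨r.head, r.pos, ∅⟩

/-- The reduct `P^M`. -/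
def Program.reduct {α : Type u} (P : Program α) (M : Set α) : Program α :=
  {r' | ∃ r ∈ P, (∀ A ∈ r.neg, ¬ Constraint.Sat M A) ∧ r' = r.pos_part}

/-- `M` is a stable model of `P`: a derivable model of the reduct `P^M`. -/
def Program.Stable {α : Type u} (P : Program α) (M : Set α) : Prop :=
  (P.reduct M).Derivable M

/-- `N ⊨_M P`: `N` is an `M`-maximal model of the Horn program `P`. -/
def Program.MMax {α : Type u} (P : Program α) (M N : Set α) : Prop :=
  N ⊆ M ∧ P.IsModel N ∧ M ∩ (P.app N).hset ⊆ N

/-- `(X,Y)` is an SE-model of `P`. -/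
def Program.SE {α : Type u} (P : Program α) (X Y : Set α) : Prop :=
  X ⊆ Y ∧ P.IsModel Y ∧ (P.reduct Y).MMax Y X

/-- `(X,Y)` is a UE-model of `P`. -/
def Program.UE {α : Type u} (P : Program α) (X Y : Set α) : Prop :=
  P.SE X Y ∧ ∀ X', P.SE X' Y → X ⊆ X' → X = X' ∨ X' = Y

/-- Strong equivalence of monotone-constraint programs. -/
def StrongEq {α : Type u} (P Q : Program α) : Prop :=
  ∀ R : Program α, R.Mono → ∀ M : Set α, (P ∪ R).Stable M ↔ (Q ∪ R).Stable M

/-- The rule `(D,{D}) ←`. -/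
def factRule {α : Type u} (D : Set α) : Rule α :=
  ⟨⟨D, {D}, fun Y hY => by simp only [Set.mem_singleton_iff] at hY; simp [hY]⟩, ∅, ∅⟩

/-- Uniform equivalence of monotone-constraint programs. -/
def UnifEq {α : Type u} (P Q : Program α) : Prop :=
  ∀ D : Set α, ∀ M : Set α,
    (P ∪ {factRule D}).Stable M ↔ (Q ∪ {factRule D}).Stable M

/-- `P` is tight on `M`. -/
def Program.Tight {α : Type u} (P : Program α) (M : Set α) : Prop :=
  ∃ lam : α → Ordinal.{u}, ∀ r ∈ P.app M, ∀ x ∈ M ∩ r.hset,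
    ∀ a ∈ M ∩ (⋃ A ∈ r.pos, A.dom), lam a < lam x


section Aux

variable {α : Type u}

lemma hset_mono' {P Q : Program α} (h : P ⊆ Q) : P.hset ⊆ Q.hset :=
  Set.biUnion_subset_biUnion_left h

lemma head_dom_subset_hset {P : Program α} {r : Rule α} (hr : r ∈ P) :
    r.head.dom ⊆ P.hset :=
  Set.subset_biUnion_of_mem (u := Rule.hset) hr

lemma app_mono' {P : Program α} (hHorn : P.Horn) (hMono : P.Mono)
    {X Y : Set α} (hXY : X ⊆ Y) : P.app X ⊆ P.app Y := by
  rintro r ⟨hrP, hpos, hneg⟩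
  refine ⟨hrP, fun A hA => ?_, fun A hA => ?_⟩
  · exact (hMono r hrP).2.1 A hA _ _ (hpos A hA)
      (Set.inter_subset_inter_left _ hXY) Set.inter_subset_right
  · rw [hHorn r hrP] at hA; exact absurd hA (Set.notMem_empty A)

lemma canSeq_zero' (P : Program α) (M : Set α) : canSeq P M 0 = ∅ :=
  Ordinal.limitRecOn_zero ..

lemma canSeq_succ' (P : Program α) (M : Set α) (o : Ordinal.{u}) :
    canSeq P M (o + 1) = (P.app (canSeq P M o)).hset ∩ M := by
  rw [canSeq, Ordinal.add_one_eq_succ, Ordinal.limitRecOn_succ]; rfl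

lemma canSeq_limit' (P : Program α) (M : Set α) {o : Ordinal.{u}} (ho : Order.IsSuccLimit o) :
    canSeq P M o = ⋃ β < o, canSeq P M β := by
  rw [canSeq, Ordinal.limitRecOn_limit _ _ _ _ ho]
  rfl

lemma canSeq_subM (P : Program α) (M : Set α) (o : Ordinal.{u}) :
    canSeq P M o ⊆ M := by
  induction o using Ordinal.induction with
  | h o IH =>
    rcases Ordinal.zero_or_succ_or_isSuccLimit o with h0 | ⟨β, hβ⟩ | hl
    · rw [h0, canSeq_zero']; exact Set.empty_subset M
    · rw [← hβ, ← Ordinal.add_one_eq_succ, canSeq_succ']; exact Set.inter_subset_right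
    · rw [canSeq_limit' P M hl]
      exact Set.iUnion₂_subset fun β hβ => IH β hβ

lemma canSeq_succ_mono (P : Program α) (hHorn : P.Horn) (hMono : P.Mono)
    (M : Set α) (o : Ordinal.{u}) :
    canSeq P M o ⊆ canSeq P M (o + 1) := by
  induction o using Ordinal.induction with
  | h o IH =>
    rcases Ordinal.zero_or_succ_or_isSuccLimit o with h0 | ⟨β, hβ⟩ | hl
    · rw [h0, canSeq_zero']; exact Set.empty_subset _
    · subst hβ
      rw [← Ordinal.add_one_eq_succ, canSeq_succ', canSeq_succ']
      exact Set.inter_subset_inter_left _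
        (hset_mono' (app_mono' hHorn hMono (IH β (Order.lt_succ β))))
    · rw [canSeq_limit' P M hl, canSeq_succ']
      refine Set.iUnion₂_subset fun β hβ => ?_
      have h1 : canSeq P M β ⊆ canSeq P M (β + 1) := IH β hβ
      have h2 : canSeq P M β ⊆ canSeq P M o := by
        rw [canSeq_limit' P M hl]
        exact Set.subset_biUnion_of_mem hβ
      refine h1.trans ?_
      rw [canSeq_succ']
      exact Set.inter_subset_inter_left _ (hset_mono' (app_mono' hHorn hMono h2))

lemma canSeq_mono (P : Program α) (hHorn : P.Horn) (hMono : P.Mono)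
    (M : Set α) : ∀ o β : Ordinal.{u}, β ≤ o → canSeq P M β ⊆ canSeq P M o := by
  intro o
  induction o using Ordinal.induction with
  | h o IH =>
    intro β hβ
    rcases eq_or_lt_of_le hβ with rfl | hlt
    · exact le_refl _
    rcases Ordinal.zero_or_succ_or_isSuccLimit o with h0 | ⟨γ, hγ⟩ | hl
    · exact absurd (h0 ▸ hlt) (not_lt_zero (a := β))
    · subst hγ
      have hβγ : β ≤ γ := Order.lt_succ_iff.mp hlt
      have : canSeq P M β ⊆ canSeq P M γ := IH γ (Order.lt_succ γ) β hβγ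
      refine this.trans ?_
      rw [← Ordinal.add_one_eq_succ]
      exact canSeq_succ_mono P hHorn hMono M γ
    · rw [canSeq_limit' P M hl]
      exact Set.subset_biUnion_of_mem hlt

/-- Every minimal model of a Horn constraint program is derivable. -/
theorem minimal_model_derivable {α : Type u} (P : Program α) (hHorn : P.Horn)
    (hMono : P.Mono) (M : Set α) (hMod : P.IsModel M)
    (hMin : ∀ N : Set α, P.IsModel N → N ⊆ M → N = M) :
    P.Derivable M := by
  -- auxiliary fact: for X ⊆ M, the head of any X-applicable rule is satisfied
  -- by (P.app X).hset ∩ M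
  have head_sat : ∀ X : Set α, X ⊆ M → ∀ r ∈ P.app X,
      Constraint.Sat ((P.app X).hset ∩ M) r.head := by
    intro X hXM r hr
    have hrM : r ∈ P.app M := app_mono' hHorn hMono hXM hr
    have hMsat : Constraint.Sat M r.head := hMod r hrM.1 hrM.2
    have hD : r.head.dom ⊆ (P.app X).hset := head_dom_subset_hset hr
    have heq : ((P.app X).hset ∩ M) ∩ r.head.dom = M ∩ r.head.dom := by
      ext a
      constructor
      · rintro ⟨⟨_, h2⟩, h3⟩; exact ⟨h2, h3⟩
      · rintro ⟨h1, h2⟩; exact ⟨⟨hD h2, h1⟩, h2⟩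
    show ((P.app X).hset ∩ M) ∩ r.head.dom ∈ r.head.sat
    rw [heq]; exact hMsat
  -- the canonical sequence stabilizes
  have hmem : ∀ a : Can P M, ∃ o : Ordinal.{u}, (a : α) ∈ canSeq P M o :=
    fun a => Set.mem_iUnion.mp a.2
  choose f hf using hmem
  set o : Ordinal.{u} := ⨆ a : Can P M, f a with ho
  have hsub : Can P M ⊆ canSeq P M o := by
    intro a ha
    exact canSeq_mono P hHorn hMono M o (f ⟨a, ha⟩)
      (Ordinal.le_iSup f ⟨a, ha⟩) (hf ⟨a, ha⟩)
  have hCan : canSeq P M o = Can P M :=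
    subset_antisymm (Set.subset_iUnion (canSeq P M) o) hsub
  have hfix : canSeq P M (o + 1) = canSeq P M o := by
    refine subset_antisymm ?_ (canSeq_succ_mono P hHorn hMono M o)
    rw [hCan]
    exact Set.subset_iUnion (canSeq P M) (o + 1)
  have hfix' : (P.app (canSeq P M o)).hset ∩ M = canSeq P M o := by
    rw [← canSeq_succ', hfix]
  -- the fixed point is a model contained in M, hence equals M
  have hNM : canSeq P M o ⊆ M := canSeq_subM P M o
  have hNmod : P.IsModel (canSeq P M o) := by
    intro r hrP hbody
    have hr : r ∈ P.app (canSeq P M o) := ⟨hrP, hbody⟩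
    have := head_sat (canSeq P M o) hNM r hr
    rwa [hfix'] at this
  have hNeq : canSeq P M o = M := hMin _ hNmod hNM
  -- build the computation
  refine ⟨⟨canSeq P M, canSeq_zero' P M, canSeq_succ_mono P hHorn hMono M,
    fun β => ?_, fun β hβ => canSeq_limit' P M hβ⟩, ?_⟩
  · constructor
    · rw [canSeq_succ']; exact Set.inter_subset_left
    · intro r hr
      rw [canSeq_succ']
      exact head_sat (canSeq P M β) (canSeq_subM P M β) r hr
  · show Can P M = M
    rw [← hCan, hNeq]
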